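/- If a list of stops L is 'zone-contiguous' (i.e., the list of zones L.map z is a concatenation of nonempty constant blocks with pairwise distinct block values), then the length of the zone sequence (first-appearance deduplication of L.map z) equals the number of blocks, and reversing L yields a zone sequence equal to the reverse of the original zone sequence. -/

import Mathlib

/-- First-appearance deduplication of a list: keeps the first occurrence of
each element, in order of first appearance. -/
def firstDedup {α : Type*} [DecidableEq α] (L : List α) : List α :=
  L.reverse.dedup.reverse

lemma dedup_replicate_append {α : Type*} [DecidableEq α] (v : α) :
    ∀ (k : ℕ) (t : List α), 0 < k → v ∉ t →
      List.dedup (List.replicate k v ++ t) = v :: t.dedup := by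
  intro k
  induction k with
  | zero => intro t h; omega
  | succ n ih =>
    intro t _ hv
    cases n with
    | zero => simp [List.dedup_cons_of_notMem, hv]
    | succ m =>
      rw [List.replicate_succ, List.cons_append,
        List.dedup_cons_of_mem (by simp [List.replicate_succ]),
        ih t (Nat.succ_pos _) hv]

lemma dedup_join_replicate {Zone : Type*} [DecidableEq Zone] :
    ∀ (blocks : List (Zone × ℕ)),
      (∀ b ∈ blocks, 0 < b.2) → (blocks.map Prod.fst).Nodup →
      ((blocks.map (fun b => List.replicate b.2 b.1)).flatten).dedup
        = blocks.map Prod.fst := by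
  intro blocks
  induction blocks with
  | nil => simp
  | cons b bs ih =>
    intro hpos hnd
    simp only [List.map_cons, List.flatten_cons]
    have hnd' := hnd
    rw [List.map_cons, List.nodup_cons] at hnd'
    have hmem : b.1 ∉ (bs.map (fun b => List.replicate b.2 b.1)).flatten := by
      intro h
      rcases List.mem_flatten.1 h with ⟨l, hl, hx⟩
      rcases List.mem_map.1 hl with ⟨c, hc, rfl⟩
      exact hnd'.1 (List.mem_map.2 ⟨c, hc, (List.eq_of_mem_replicate hx).symm⟩)
    rw [dedup_replicate_append b.1 b.2 _ (hpos b List.mem_cons_self) hmem,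
      ih (fun c hc => hpos c (List.mem_cons_of_mem _ hc)) hnd'.2]

lemma reverse_join_replicate {Zone : Type*} [DecidableEq Zone]
    (blocks : List (Zone × ℕ)) :
    ((blocks.map (fun b => List.replicate b.2 b.1)).flatten).reverse
      = ((blocks.reverse.map (fun b => List.replicate b.2 b.1)).flatten) := by
  rw [List.reverse_flatten]
  congr 1
  rw [List.map_map, ← List.map_reverse]
  apply List.map_congr_left
  intro b _
  simp

theorem zone_contiguous_zone_sequence {Stop Zone : Type*} [DecidableEq Zone]
    (L : List Stop) (z : Stop → Zone) (blocks : List (Zone × ℕ))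
    (hpos : ∀ b ∈ blocks, 0 < b.2)
    (hdistinct : (blocks.map Prod.fst).Nodup)
    (hblocks : L.map z = (blocks.map (fun b => List.replicate b.2 b.1)).flatten) :
    (firstDedup (L.map z)).length = blocks.length ∧
    firstDedup (L.reverse.map z) = (firstDedup (L.map z)).reverse := by
  have hpos' : ∀ b ∈ blocks.reverse, 0 < b.2 := fun b hb => hpos b (List.mem_reverse.1 hb)
  have hnd' : (blocks.reverse.map Prod.fst).Nodup := by
    rw [List.map_reverse, List.nodup_reverse]; exact hdistinct
  have hrev : ((L.map z).reverse).dedup = blocks.reverse.map Prod.fst := by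
    rw [hblocks, reverse_join_replicate]
    exact dedup_join_replicate _ hpos' hnd'
  have hfwd : (L.map z).dedup = blocks.map Prod.fst :=
    hblocks ▸ dedup_join_replicate _ hpos hdistinct
  constructor
  · simp [firstDedup, hrev]
  · rw [List.map_reverse]
    simp only [firstDedup, List.reverse_reverse, hrev, hfwd, List.map_reverse]
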